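/- Let q be unimodular, let F and K_u be complex Hilbert spaces, P an orthogonal projection and U a unitary on F, and (W₁,W₂) a pair of unitaries on K_u with W₁W₂ = qW₂W₁. Then the BCL-1 q-model pair ( (R_q⊗P^⊥U + M_zR_q⊗PU) ⊕ W₁ , (R_{q̄}⊗U*P + R_{q̄}M_z⊗U*P^⊥) ⊕ W₂ ) on (H²⊗F) ⊕ K_u is doubly q-commutative if and only if PUP^⊥ = 0. -/

import Mathlib

set_option linter.unusedSectionVars false
set_option maxHeartbeats 1000000

open ContinuousLinearMap
open scoped ComplexInnerProductSpace

/-- The model space `(H² ⊗ F) ⊕ K_u`, with `H² ⊗ F` identified with `ℓ²(ℕ, F)`. -/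
noncomputable abbrev BCLModelSpace (F Ku : Type*) [NormedAddCommGroup F]
    [InnerProductSpace ℂ F] [NormedAddCommGroup Ku] [InnerProductSpace ℂ Ku] :=
  WithLp 2 ((lp (fun _ : ℕ => F) 2) × Ku)

namespace BCLAux


variable {F Ku : Type*} [NormedAddCommGroup F] [InnerProductSpace ℂ F] [CompleteSpace F]
  [NormedAddCommGroup Ku] [InnerProductSpace ℂ Ku] [CompleteSpace Ku]

/-- coordinate of the `ℓ²` part -/
def c (x : BCLModelSpace F Ku) (n : ℕ) : F := ((WithLp.equiv 2 _ x).1 : ∀ _ : ℕ, F) n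

/-- the `Ku` part -/
def d (x : BCLModelSpace F Ku) : Ku := (WithLp.equiv 2 _ x).2

lemma model_ext {x y : BCLModelSpace F Ku} (h1 : ∀ n, c x n = c y n) (h2 : d x = d y) :
    x = y := by
  apply (WithLp.equiv 2 _).injective
  exact Prod.ext (lp.ext (funext h1)) h2

lemma c_smul (a : ℂ) (x : BCLModelSpace F Ku) (n : ℕ) : c (a • x) n = a • c x n := rfl

lemma d_smul (a : ℂ) (x : BCLModelSpace F Ku) : d (a • x) = a • d x := rfl

lemma c_add (x y : BCLModelSpace F Ku) (n : ℕ) : c (x + y) n = c x n + c y n := rfl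

lemma d_add (x y : BCLModelSpace F Ku) : d (x + y) = d x + d y := rfl

/-- embedding of `F` at coordinate `m` -/
noncomputable def emb (m : ℕ) (f : F) : BCLModelSpace F Ku :=
  (WithLp.equiv 2 _).symm (lp.single 2 m f, 0)

/-- embedding of `Ku` -/
noncomputable def embK (k : Ku) : BCLModelSpace F Ku :=
  (WithLp.equiv 2 _).symm (0, k)

lemma c_emb (m : ℕ) (f : F) (n : ℕ) : c (emb (Ku := Ku) m f) n = if n = m then f else 0 := by
  simp only [c, emb, Equiv.apply_symm_apply]
  rw [lp.single_apply]
  split_ifs with h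
  · subst h; simp
  · simp [h]

lemma d_emb (m : ℕ) (f : F) : d (emb (Ku := Ku) m f) = 0 := rfl

lemma c_embK (k : Ku) (n : ℕ) : c (embK (F := F) k) n = 0 := rfl

lemma d_embK (k : Ku) : d (embK (F := F) k) = k := rfl

lemma inner_emb (m : ℕ) (f : F) (y : BCLModelSpace F Ku) : ⟪emb m f, y⟫ = ⟪f, c y m⟫ := by
  rw [WithLp.prod_inner_apply]
  have h1 : (emb (Ku := Ku) m f).ofLp.1 = lp.single 2 m f := rfl
  have h2 : (emb (Ku := Ku) m f).ofLp.2 = (0 : Ku) := rfl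
  rw [h1, h2, inner_zero_left, add_zero, lp.inner_single_left]
  rfl

lemma inner_embK (k : Ku) (y : BCLModelSpace F Ku) : ⟪embK k, y⟫ = ⟪k, d y⟫ := by
  rw [WithLp.prod_inner_apply]
  have h1 : (embK (F := F) k).ofLp.1 = (0 : lp (fun _ : ℕ => F) 2) := rfl
  have h2 : (embK (F := F) k).ofLp.2 = k := rfl
  rw [h1, h2, inner_zero_left, zero_add]
  rfl

end BCLAux

open BCLAux

theorem stmt_10 (q : ℂ) (hq : ‖q‖ = 1)
    {F Ku : Type*} [NormedAddCommGroup F] [InnerProductSpace ℂ F] [CompleteSpace F]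
    [NormedAddCommGroup Ku] [InnerProductSpace ℂ Ku] [CompleteSpace Ku]
    (P U : F →L[ℂ] F)
    (hP_idem : P ∘L P = P) (hP_sa : IsSelfAdjoint P)
    (hU₁ : adjoint U ∘L U = 1) (hU₂ : U ∘L adjoint U = 1)
    (W₁ W₂ : Ku →L[ℂ] Ku)
    (hW₁₁ : adjoint W₁ ∘L W₁ = 1) (hW₁₂ : W₁ ∘L adjoint W₁ = 1)
    (hW₂₁ : adjoint W₂ ∘L W₂ = 1) (hW₂₂ : W₂ ∘L adjoint W₂ = 1)
    (hW : W₁ ∘L W₂ = q • (W₂ ∘L W₁))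
    (V₁ V₂ : BCLModelSpace F Ku →L[ℂ] BCLModelSpace F Ku)
    -- V₁ = (R_q ⊗ P^⊥U + M_z R_q ⊗ PU) ⊕ W₁, described coordinatewise:
    (hV₁u : ∀ x, (WithLp.equiv 2 _ (V₁ x)).2 = W₁ ((WithLp.equiv 2 _ x).2))
    (hV₁0 : ∀ x, ((WithLp.equiv 2 _ (V₁ x)).1 : ∀ _ : ℕ, F) 0
      = (1 - P) (U (((WithLp.equiv 2 _ x).1 : ∀ _ : ℕ, F) 0)))
    (hV₁n : ∀ x, ∀ n : ℕ, ((WithLp.equiv 2 _ (V₁ x)).1 : ∀ _ : ℕ, F) (n + 1)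
      = q ^ (n + 1) • (1 - P) (U (((WithLp.equiv 2 _ x).1 : ∀ _ : ℕ, F) (n + 1)))
        + q ^ n • P (U (((WithLp.equiv 2 _ x).1 : ∀ _ : ℕ, F) n)))
    -- V₂ = (R_q̄ ⊗ U*P + R_q̄ M_z ⊗ U*P^⊥) ⊕ W₂, described coordinatewise:
    (hV₂u : ∀ x, (WithLp.equiv 2 _ (V₂ x)).2 = W₂ ((WithLp.equiv 2 _ x).2))
    (hV₂0 : ∀ x, ((WithLp.equiv 2 _ (V₂ x)).1 : ∀ _ : ℕ, F) 0
      = adjoint U (P (((WithLp.equiv 2 _ x).1 : ∀ _ : ℕ, F) 0)))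
    (hV₂n : ∀ x, ∀ n : ℕ, ((WithLp.equiv 2 _ (V₂ x)).1 : ∀ _ : ℕ, F) (n + 1)
      = (starRingEnd ℂ q) ^ (n + 1) •
          (adjoint U (P (((WithLp.equiv 2 _ x).1 : ∀ _ : ℕ, F) (n + 1)))
            + adjoint U ((1 - P) (((WithLp.equiv 2 _ x).1 : ∀ _ : ℕ, F) n)))) :
    -- the model pair is doubly q-commutative iff P U P^⊥ = 0
    (V₁ ∘L V₂ = q • (V₂ ∘L V₁) ∧ V₂ ∘L adjoint V₁ = q • (adjoint V₁ ∘L V₂)) ↔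
      P ∘L U ∘L (1 - P) = 0 := by
  classical
  -- basic scalar facts
  have hq0 : q ≠ 0 := by
    intro h; rw [h, norm_zero] at hq; exact one_ne_zero hq.symm
  have hqc : q * starRingEnd ℂ q = 1 := by
    have := Complex.mul_conj q
    rw [this]
    norm_cast
    rw [Complex.normSq_eq_norm_sq, hq, one_pow]
  have hcq : starRingEnd ℂ q = q⁻¹ := eq_inv_of_mul_eq_one_left (by rw [mul_comm] at hqc; exact hqc)
  -- restated coordinatewise hypotheses
  have hV₁0' : ∀ x : BCLModelSpace F Ku, c (V₁ x) 0 = (1 - P) (U (c x 0)) := hV₁0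
  have hV₁n' : ∀ (x : BCLModelSpace F Ku) (n : ℕ), c (V₁ x) (n + 1)
      = q ^ (n + 1) • (1 - P) (U (c x (n + 1))) + q ^ n • P (U (c x n)) := hV₁n
  have hV₁u' : ∀ x : BCLModelSpace F Ku, d (V₁ x) = W₁ (d x) := hV₁u
  have hV₂0' : ∀ x : BCLModelSpace F Ku, c (V₂ x) 0 = adjoint U (P (c x 0)) := hV₂0
  have hV₂n' : ∀ (x : BCLModelSpace F Ku) (n : ℕ), c (V₂ x) (n + 1)
      = (q⁻¹) ^ (n + 1) • (adjoint U (P (c x (n + 1))) + adjoint U ((1 - P) (c x n))) := by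
    intro x n; rw [← hcq]; exact hV₂n x n
  have hV₂u' : ∀ x : BCLModelSpace F Ku, d (V₂ x) = W₂ (d x) := hV₂u
  -- pointwise operator facts
  have hPP : ∀ v : F, P (P v) = P v := fun v => by
    simpa using ContinuousLinearMap.ext_iff.mp hP_idem v
  have hUUa : ∀ v : F, U (adjoint U v) = v := fun v => by
    simpa using ContinuousLinearMap.ext_iff.mp hU₂ v
  have haUU : ∀ v : F, adjoint U (U v) = v := fun v => by
    simpa using ContinuousLinearMap.ext_iff.mp hU₁ v
  have hW₁₂' : ∀ k : Ku, W₁ (adjoint W₁ k) = k := fun k => by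
    simpa using ContinuousLinearMap.ext_iff.mp hW₁₂ k
  have hW₁₁' : ∀ k : Ku, adjoint W₁ (W₁ k) = k := fun k => by
    simpa using ContinuousLinearMap.ext_iff.mp hW₁₁ k
  have hW' : ∀ k : Ku, W₁ (W₂ k) = q • W₂ (W₁ k) := fun k => by
    simpa using ContinuousLinearMap.ext_iff.mp hW k
  have hWad : ∀ k : Ku, W₂ (adjoint W₁ k) = q • adjoint W₁ (W₂ k) := by
    intro k
    have e1 : W₁ (W₂ (adjoint W₁ k)) = q • W₂ k := by
      rw [hW', hW₁₂']
    have e2 := congrArg (adjoint W₁) e1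
    rw [hW₁₁', map_smul] at e2
    exact e2
  -- self-adjointness flips
  have hPadj : adjoint P = P := by
    rw [← ContinuousLinearMap.star_eq_adjoint]; exact hP_sa
  have hPflip : ∀ a b : F, ⟪P a, b⟫ = ⟪a, P b⟫ := fun a b => by
    conv_lhs => rw [← hPadj]
    exact ContinuousLinearMap.adjoint_inner_left P b a
  have hcflip : ∀ a b : F, ⟪(1 - P) a, b⟫ = ⟪a, (1 - P) b⟫ := fun a b => by
    simp only [ContinuousLinearMap.sub_apply, ContinuousLinearMap.one_apply,
      inner_sub_left, inner_sub_right, hPflip]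
  have hUflip : ∀ a b : F, ⟪U a, b⟫ = ⟪a, adjoint U b⟫ := fun a b =>
    (ContinuousLinearMap.adjoint_inner_right U a b).symm
  -- decomposition of V₁ on embedded vectors
  have hV₁emb : ∀ (m : ℕ) (f : F), V₁ (emb m f) =
      emb m (q ^ m • (1 - P) (U f)) + emb (m + 1) (q ^ m • P (U f)) := by
    intro m f
    apply model_ext
    · intro n
      rw [c_add, c_emb, c_emb]
      match n with
      | 0 =>
        rw [hV₁0', c_emb]
        match m with
        | 0 => simp
        | m + 1 => simp
      | n + 1 =>
        rw [hV₁n', c_emb, c_emb]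
        by_cases h1 : n + 1 = m
        · subst h1; simp
        · by_cases h2 : n = m
          · subst h2; simp [h1]
          · have h3 : n + 1 ≠ m + 1 := by omega
            simp [h1, h2, h3]
    · rw [d_add, d_emb, d_emb, hV₁u', d_emb, map_zero, add_zero]
  have hV₁embK : ∀ k : Ku, V₁ (embK k) = embK (W₁ k) := by
    intro k
    apply model_ext
    · intro n
      rw [c_embK]
      match n with
      | 0 => rw [hV₁0', c_embK, map_zero, map_zero]
      | n + 1 => rw [hV₁n', c_embK, c_embK]; simp
    · rw [d_embK, hV₁u', d_embK]
  -- the adjoint of V₁, coordinatewise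
  have hAc : ∀ (x : BCLModelSpace F Ku) (m : ℕ), c (adjoint V₁ x) m =
      (q⁻¹) ^ m • (adjoint U ((1 - P) (c x m)) + adjoint U (P (c x (m + 1)))) := by
    intro x m
    apply ext_inner_left ℂ
    intro f
    rw [← inner_emb, ContinuousLinearMap.adjoint_inner_right, hV₁emb, inner_add_left,
      inner_emb, inner_emb]
    simp only [inner_smul_left, inner_smul_right, inner_add_right, hcflip, hPflip, hUflip,
      map_pow, hcq]
    ring
  have hAd : ∀ x : BCLModelSpace F Ku, d (adjoint V₁ x) = adjoint W₁ (d x) := by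
    intro x
    apply ext_inner_left ℂ
    intro k
    rw [← inner_embK, ContinuousLinearMap.adjoint_inner_right, hV₁embK, inner_embK,
      ContinuousLinearMap.adjoint_inner_right]
  constructor
  · -- forward direction
    rintro ⟨-, h2⟩
    have hkey1 : ∀ g : F, (1 - P) (adjoint U (P g)) = 0 := by
      intro g
      have e := ContinuousLinearMap.ext_iff.mp h2 (emb 0 g)
      have e0 : c (V₂ (adjoint V₁ (emb 0 g))) 0 = q • c (adjoint V₁ (V₂ (emb 0 g))) 0 := by
        have h := congrArg (fun z => c z 0) e
        simpa only [ContinuousLinearMap.comp_apply, ContinuousLinearMap.smul_apply, c_smul]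
          using h
      have E1 : c (V₂ (adjoint V₁ (emb 0 g))) 0
          = adjoint U (P (adjoint U ((1 - P) g))) := by
        rw [hV₂0', hAc]
        simp [c_emb]
      have E2 : q • c (adjoint V₁ (V₂ (emb 0 g))) 0
          = q • adjoint U ((1 - P) (adjoint U (P g)))
            + adjoint U (P (adjoint U ((1 - P) g))) := by
        rw [hAc, hV₂0', hV₂n']
        simp only [c_emb, if_pos, if_neg, Nat.one_ne_zero, reduceIte, pow_zero, pow_one,
          one_smul, map_zero, zero_add, add_zero, map_add, map_smul, smul_add, smul_smul]
        match_scalars <;> (field_simp; try ring)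
      have h4 : q • adjoint U ((1 - P) (adjoint U (P g))) = 0 := by
        have h5 := E1.symm.trans (e0.trans E2)
        rwa [right_eq_add] at h5
      have h6 : adjoint U ((1 - P) (adjoint U (P g))) = 0 :=
        (smul_eq_zero.mp h4).resolve_left hq0
      have h7 := congrArg U h6
      rwa [hUUa, map_zero] at h7
    have key : ∀ v : F, P (U ((1 - P) v)) = 0 := by
      intro v
      apply ext_inner_left ℂ
      intro w
      rw [inner_zero_right, ← hPflip, ← ContinuousLinearMap.adjoint_inner_left, ← hcflip,
        hkey1, inner_zero_left]
    ext v
    simp only [ContinuousLinearMap.comp_apply, ContinuousLinearMap.zero_apply, key]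
  · -- backward direction
    intro hPU
    have hPU' : ∀ v : F, P (U ((1 - P) v)) = 0 := by
      intro v
      simpa only [ContinuousLinearMap.comp_apply, ContinuousLinearMap.zero_apply]
        using ContinuousLinearMap.ext_iff.mp hPU v
    have hkey2 : ∀ v : F, P (adjoint U (P v)) = adjoint U (P v) := by
      intro v
      have h0 : (1 - P) (adjoint U (P v)) = 0 := by
        apply ext_inner_left ℂ
        intro w
        rw [inner_zero_right, ← hcflip, ContinuousLinearMap.adjoint_inner_right, ← hPflip,
          hPU', inner_zero_left]
      rw [ContinuousLinearMap.sub_apply, ContinuousLinearMap.one_apply, sub_eq_zero] at h0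
      exact h0.symm
    constructor
    · -- q-commutation
      ext x
      refine model_ext (fun n => ?_) ?_
      · simp only [ContinuousLinearMap.comp_apply, ContinuousLinearMap.smul_apply, c_smul]
        match n with
        | 0 =>
          rw [hV₁0' (V₂ x), hV₂0' x, hV₂0' (V₁ x), hV₁0' x]
          simp [ContinuousLinearMap.sub_apply, ContinuousLinearMap.one_apply, map_sub,
            hUUa, hPP]
        | n + 1 =>
          rw [hV₁n' (V₂ x) n, hV₂n' x n, hV₂n' (V₁ x) n, hV₁n' x n]
          match n with
          | 0 =>
            rw [hV₂0' x, hV₁0' x]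
            simp only [ContinuousLinearMap.sub_apply, ContinuousLinearMap.one_apply, map_sub,
              map_add, map_smul, smul_sub, smul_add, smul_smul, hUUa, haUU, hPP, pow_zero,
              pow_one, one_smul]
            match_scalars <;> (ring_nf <;> field_simp <;> ring)
          | m + 1 =>
            rw [hV₂n' x m, hV₁n' x m]
            simp only [ContinuousLinearMap.sub_apply, ContinuousLinearMap.one_apply, map_sub,
              map_add, map_smul, smul_sub, smul_add, smul_smul, hUUa, haUU, hPP]
            match_scalars <;> (ring_nf <;> field_simp <;> ring)
      · simp only [ContinuousLinearMap.comp_apply, ContinuousLinearMap.smul_apply, d_smul,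
          hV₁u', hV₂u']
        exact hW' (d x)
    · -- doubly q-commutation
      ext x
      refine model_ext (fun n => ?_) ?_
      · simp only [ContinuousLinearMap.comp_apply, ContinuousLinearMap.smul_apply, c_smul]
        match n with
        | 0 =>
          rw [hV₂0' (adjoint V₁ x), hAc x 0, hAc (V₂ x) 0, hV₂0' x, hV₂n' x 0]
          simp only [ContinuousLinearMap.sub_apply, ContinuousLinearMap.one_apply, map_sub,
            map_add, map_smul, smul_sub, smul_add, smul_smul, hkey2, pow_zero, pow_one,
            one_smul]
          match_scalars <;> (ring_nf <;> field_simp)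
        | n + 1 =>
          rw [hV₂n' (adjoint V₁ x) n, hAc x (n + 1), hAc x n, hAc (V₂ x) (n + 1),
            hV₂n' x (n + 1), hV₂n' x n]
          simp only [ContinuousLinearMap.sub_apply, ContinuousLinearMap.one_apply, map_sub,
            map_add, map_smul, smul_sub, smul_add, smul_smul, hkey2]
          match_scalars <;> (ring_nf <;> field_simp)
      · simp only [ContinuousLinearMap.comp_apply, ContinuousLinearMap.smul_apply, d_smul,
          hV₂u', hAd]
        exact hWad (d x)
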